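/- Let Ψ : ℕ → ℝ satisfy Ψ(0) = 0 and define λ^{(m)}_k := Σ_{i=0}^{k−1} C(k−1,i)·(−1)^i·(Ψ(m−k+i+1) − Ψ(m−k+i)) for 1 ≤ k ≤ m. Then for all integers n ≥ 1, 0 ≤ i ≤ n−1 and 1 ≤ k ≤ n−i, one has Σ_{l=0}^{i} C(i,l)·λ^{(n)}_{k+l} = λ^{(n−i)}_k. (This is the dimensional consistency of the Lévy-frailty Marshall–Olkin rates: the aggregate rate of shocks in the n-component model whose intersection with a fixed set of n−i surviving components is a given set of size k equals the corresponding rate of the (n−i)-component model.) -/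

import Mathlib

/-- The Lévy-frailty Marshall–Olkin shock rate `λ^{(m)}_k` associated to a set of
`k` components out of `m`, for a Laplace exponent `Ψ`. -/
noncomputable def lfmoRate (Ψ : ℕ → ℝ) (m k : ℕ) : ℝ :=
  ∑ i ∈ Finset.range k,
    ((k - 1).choose i : ℝ) * (-1 : ℝ) ^ i * (Ψ (m - k + i + 1) - Ψ (m - k + i))

lemma binom_pascal_sum (f : ℕ → ℝ) (n : ℕ) :
    ∑ l ∈ Finset.range (n + 2), (((n + 1).choose l : ℕ) : ℝ) * f l
      = ∑ l ∈ Finset.range (n + 1), ((n.choose l : ℕ) : ℝ) * f l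
        + ∑ l ∈ Finset.range (n + 1), ((n.choose l : ℕ) : ℝ) * f (l + 1) := by
  rw [Finset.sum_range_succ' (fun l => (((n + 1).choose l : ℕ) : ℝ) * f l) (n + 1),
    Finset.sum_range_succ' (fun l => ((n.choose l : ℕ) : ℝ) * f l) n]
  have h1 : ∀ l, (((n + 1).choose (l + 1) : ℕ) : ℝ)
      = ((n.choose l : ℕ) : ℝ) + ((n.choose (l + 1) : ℕ) : ℝ) := by
    intro l
    exact_mod_cast congrArg (Nat.cast : ℕ → ℝ) (Nat.choose_succ_succ n l)
  have h2 : ∑ l ∈ Finset.range (n + 1), (((n + 1).choose (l + 1) : ℕ) : ℝ) * f (l + 1)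
      = ∑ l ∈ Finset.range (n + 1), ((n.choose l : ℕ) : ℝ) * f (l + 1)
        + ∑ l ∈ Finset.range (n + 1), ((n.choose (l + 1) : ℕ) : ℝ) * f (l + 1) := by
    rw [← Finset.sum_add_distrib]
    apply Finset.sum_congr rfl
    intro l _
    rw [h1 l, add_mul]
  rw [h2]
  have h3 : ∑ l ∈ Finset.range (n + 1), ((n.choose (l + 1) : ℕ) : ℝ) * f (l + 1)
      = ∑ l ∈ Finset.range n, ((n.choose (l + 1) : ℕ) : ℝ) * f (l + 1) := by
    rw [Finset.sum_range_succ]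
    simp [Nat.choose_succ_self]
  rw [h3]
  simp [Nat.choose_zero_right]
  ring

lemma lfmo_pascal (Ψ : ℕ → ℝ) (d k : ℕ) :
    lfmoRate Ψ (d + k + 2) (k + 1) + lfmoRate Ψ (d + k + 2) (k + 2)
      = lfmoRate Ψ (d + k + 1) (k + 1) := by
  unfold lfmoRate
  have e1 : d + k + 2 - (k + 1) = d + 1 := by omega
  have e2 : d + k + 2 - (k + 2) = d := by omega
  have e3 : d + k + 1 - (k + 1) = d := by omega
  rw [e1, e2, e3]
  simp only [Nat.add_sub_cancel]
  have key := binom_pascal_sum (fun j => (-1 : ℝ) ^ j * (Ψ (d + j + 1) - Ψ (d + j))) k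
  simp only [mul_assoc]
  have e0 : k + 2 - 1 = k + 1 := by omega
  rw [e0, key]
  have hz : (∑ j ∈ Finset.range (k + 1),
        ((k.choose j : ℕ) : ℝ) * ((-1 : ℝ) ^ j * (Ψ (d + 1 + j + 1) - Ψ (d + 1 + j))))
      + ∑ j ∈ Finset.range (k + 1),
        ((k.choose j : ℕ) : ℝ) * ((-1 : ℝ) ^ (j + 1) * (Ψ (d + (j + 1) + 1) - Ψ (d + (j + 1)))) = 0 := by
    rw [← Finset.sum_add_distrib]
    apply Finset.sum_eq_zero
    intro j _
    have a1 : d + 1 + j + 1 = d + (j + 1) + 1 := by omega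
    have a2 : d + 1 + j = d + (j + 1) := by omega
    rw [a1, a2]
    ring
  linarith [hz]

lemma lfmo_main (Ψ : ℕ → ℝ) : ∀ i r k : ℕ, 1 ≤ k → k ≤ r →
    ∑ l ∈ Finset.range (i + 1), (i.choose l : ℝ) * lfmoRate Ψ (i + r) (k + l)
      = lfmoRate Ψ r k := by
  intro i
  induction i with
  | zero =>
    intro r k hk hkr
    simp
  | succ i ih =>
    intro r k hk hkr
    obtain ⟨k', rfl⟩ : ∃ k', k = k' + 1 := ⟨k - 1, by omega⟩
    rw [show i + 1 + 1 = i + 2 from rfl,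
      binom_pascal_sum (fun l => lfmoRate Ψ (i + 1 + r) (k' + 1 + l)) i,
      ← Finset.sum_add_distrib]
    have hstep : ∀ l ∈ Finset.range (i + 1),
        ((i.choose l : ℕ) : ℝ) * lfmoRate Ψ (i + 1 + r) (k' + 1 + l)
          + ((i.choose l : ℕ) : ℝ) * lfmoRate Ψ (i + 1 + r) (k' + 1 + (l + 1))
        = ((i.choose l : ℕ) : ℝ) * lfmoRate Ψ (i + r) (k' + 1 + l) := by
      intro l hl
      have hl' : l ≤ i := by
        have := Finset.mem_range.mp hl; omega
      rw [← mul_add]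
      congr 1
      have hp := lfmo_pascal Ψ (i + r - k' - l - 1) (k' + l)
      rw [show (i + r - k' - l - 1) + (k' + l) + 2 = i + 1 + r from by omega,
        show (i + r - k' - l - 1) + (k' + l) + 1 = i + r from by omega,
        show (k' + l) + 1 = k' + 1 + l from by omega,
        show (k' + l) + 2 = k' + 1 + (l + 1) from by omega] at hp
      exact hp
    rw [Finset.sum_congr rfl hstep]
    exact ih r (k' + 1) hk hkr

/-- Dimensional consistency of the Lévy-frailty Marshall–Olkin rates:
`Σ_{l=0}^{i} C(i,l) · λ^{(n)}_{k+l} = λ^{(n-i)}_k`. -/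
theorem stmt5 (Ψ : ℕ → ℝ) (hΨ0 : Ψ 0 = 0) (n i k : ℕ) (hn : 1 ≤ n)
    (hi : i ≤ n - 1) (hk1 : 1 ≤ k) (hk : k ≤ n - i) :
    ∑ l ∈ Finset.range (i + 1), (i.choose l : ℝ) * lfmoRate Ψ n (k + l) =
      lfmoRate Ψ (n - i) k := by
  have h := lfmo_main Ψ i (n - i) k hk1 hk
  have e : i + (n - i) = n := by omega
  rw [e] at h
  exact h
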